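/- Let 0 < q̃ < p̃ < 1 and define H(x,y) = x·ln(x/y) + (1−x)·ln((1−x)/(1−y)) for x, y ∈ (0,1). For α, β ∈ (0,1) with α + β < 1 define M_L⁰(α,β) = [α·ln(α/(1−β)) + (1−α)·ln((1−α)/β)]/H(q̃,p̃) and M_L¹(α,β) = [β·ln(β/(1−α)) + (1−β)·ln((1−β)/α)]/H(p̃,q̃). Then at every such (α,β) all four partial derivatives ∂M_L⁰/∂α, ∂M_L⁰/∂β, ∂M_L¹/∂α, ∂M_L¹/∂β are strictly negative; in particular ∂M_L⁰/∂α and ∂M_L¹/∂β are proportional (with positive proportionality constant) to −ln(1 + (1−α−β)/(αβ)) < 0, and ∂M_L⁰/∂β and ∂M_L¹/∂α are proportional (with positive proportionality constant) to −(1−α−β) < 0. -/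

import Mathlib

lemma Hpos (x y : ℝ) (hx0 : 0 < x) (hx1 : x < 1) (hy0 : 0 < y) (hy1 : y < 1)
    (hxy : x ≠ y) :
    0 < x * Real.log (x / y) + (1 - x) * Real.log ((1 - x) / (1 - y)) := by
  have hx' : x ≠ 0 := hx0.ne'
  have h1x : (0:ℝ) < 1 - x := by linarith
  have h1y : (0:ℝ) < 1 - y := by linarith
  have h1x' : (1:ℝ) - x ≠ 0 := h1x.ne'
  have h1 : Real.log (y / x) < y / x - 1 :=
    Real.log_lt_sub_one_of_pos (by positivity) (by
      intro h; apply hxy; field_simp at h; linarith)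
  have h2 : Real.log ((1 - y) / (1 - x)) < (1 - y) / (1 - x) - 1 :=
    Real.log_lt_sub_one_of_pos (by positivity) (by
      intro h; apply hxy; field_simp at h; linarith)
  have e1 : Real.log (x / y) = -Real.log (y / x) := by
    rw [← Real.log_inv, inv_div]
  have e2 : Real.log ((1 - x) / (1 - y)) = -Real.log ((1 - y) / (1 - x)) := by
    rw [← Real.log_inv, inv_div]
  have m1 : x * Real.log (y / x) < y - x := by
    have h := mul_lt_mul_of_pos_left h1 hx0
    have hx2 : x * (y / x - 1) = y - x := by field_simp
    rwa [hx2] at h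
  have m2 : (1 - x) * Real.log ((1 - y) / (1 - x)) < x - y := by
    have h := mul_lt_mul_of_pos_left h2 h1x
    have hx2 : (1 - x) * ((1 - y) / (1 - x) - 1) = x - y := by field_simp; ring
    rwa [hx2] at h
  rw [e1, e2]
  linarith

lemma lemA (a b : ℝ) (ha : 0 < a) (hb : 0 < b) (hab : a + b < 1) :
    HasDerivAt (fun x => x * Real.log (x / (1 - b)) + (1 - x) * Real.log ((1 - x) / b))
      (-Real.log (1 + (1 - a - b) / (a * b))) a := by
  have h1a : (0:ℝ) < 1 - a := by linarith
  have h1b : (0:ℝ) < 1 - b := by linarith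
  have ha' : a ≠ 0 := ha.ne'
  have hb' : b ≠ 0 := hb.ne'
  have h1a' : (1:ℝ) - a ≠ 0 := h1a.ne'
  have h1b' : (1:ℝ) - b ≠ 0 := h1b.ne'
  have d1 : HasDerivAt (fun x : ℝ => x / (1 - b)) (1 / (1 - b)) a := by
    simpa using (hasDerivAt_id a).div_const (1 - b)
  have d1l := d1.log (by positivity)
  have d2 := (hasDerivAt_id a).mul d1l
  have dsub : HasDerivAt (fun x : ℝ => 1 - x) (-1) a := by
    simpa using (hasDerivAt_id a).const_sub 1
  have d3 : HasDerivAt (fun x : ℝ => (1 - x) / b) (-1 / b) a := dsub.div_const b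
  have d3l := d3.log (by positivity)
  have d4 := dsub.mul d3l
  have htot := d2.add d4
  refine htot.congr_deriv ?_
  symm
  simp only [id_eq]
  have n1 : a * (1 / (1 - b) / (a / (1 - b))) = 1 := by field_simp
  have n2 : (1 - a) * (-1 / b / ((1 - a) / b)) = -1 := by field_simp
  have hq : 1 + (1 - a - b) / (a * b) = ((1 - a) * (1 - b)) / (a * b) := by
    field_simp; ring
  rw [n1, n2, hq, Real.log_div (by positivity) (by positivity),
    Real.log_div ha' h1b', Real.log_div h1a' hb',
    Real.log_mul h1a' h1b', Real.log_mul ha' hb']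
  ring

lemma lemB (a b : ℝ) (ha : 0 < a) (hb : 0 < b) (hab : a + b < 1) :
    HasDerivAt (fun y => a * Real.log (a / (1 - y)) + (1 - a) * Real.log ((1 - a) / y))
      (1 / (b * (1 - b)) * (-(1 - a - b))) b := by
  have h1a : (0:ℝ) < 1 - a := by linarith
  have h1b : (0:ℝ) < 1 - b := by linarith
  have ha' : a ≠ 0 := ha.ne'
  have hb' : b ≠ 0 := hb.ne'
  have h1a' : (1:ℝ) - a ≠ 0 := h1a.ne'
  have h1b' : (1:ℝ) - b ≠ 0 := h1b.ne'
  have dsub : HasDerivAt (fun y : ℝ => 1 - y) (-1) b := by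
    simpa using (hasDerivAt_id b).const_sub 1
  have d1 : HasDerivAt (fun y : ℝ => a / (1 - y))
      ((0 * (1 - b) - a * (-1)) / (1 - b) ^ 2) b :=
    (hasDerivAt_const b a).div dsub h1b'
  have d1l := (d1.log (by positivity)).const_mul a
  have d2 : HasDerivAt (fun y : ℝ => (1 - a) / y)
      ((0 * b - (1 - a) * 1) / b ^ 2) b :=
    (hasDerivAt_const b (1 - a)).div (hasDerivAt_id b) hb'
  have d2l := (d2.log (by positivity)).const_mul (1 - a)
  refine (d1l.add d2l).congr_deriv ?_
  field_simp
  ring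

/-- Equations (54)–(55) of the paper: monotonicity of the leading terms `M_L⁰`, `M_L¹`
of the legitimate fusion center's SPRT expected sample sizes in the prescribed error
probabilities: all four partial derivatives are strictly negative, being positive
multiples of `−ln(1 + (1−α−β)/(αβ))` and `−(1−α−β)` respectively. -/
theorem stmt_12 (qt pt : ℝ) (h0 : 0 < qt) (h1 : qt < pt) (h2 : pt < 1)
    (H : ℝ → ℝ → ℝ)
    (hH : ∀ x y, H x y = x * Real.log (x / y) + (1 - x) * Real.log ((1 - x) / (1 - y)))
    (M0 M1 : ℝ → ℝ → ℝ)
    (hM0 : ∀ α β, M0 α β =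
      (α * Real.log (α / (1 - β)) + (1 - α) * Real.log ((1 - α) / β)) / H qt pt)
    (hM1 : ∀ α β, M1 α β =
      (β * Real.log (β / (1 - α)) + (1 - β) * Real.log ((1 - β) / α)) / H pt qt) :
    ∀ α β : ℝ, 0 < α → 0 < β → α + β < 1 →
      (∃ c > (0 : ℝ),
        HasDerivAt (fun x => M0 x β) (c * (-Real.log (1 + (1 - α - β) / (α * β)))) α) ∧
      (∃ c > (0 : ℝ), HasDerivAt (fun y => M0 α y) (c * (-(1 - α - β))) β) ∧
      (∃ c > (0 : ℝ), HasDerivAt (fun x => M1 x β) (c * (-(1 - α - β))) α) ∧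
      (∃ c > (0 : ℝ),
        HasDerivAt (fun y => M1 α y) (c * (-Real.log (1 + (1 - α - β) / (α * β)))) β) ∧
      -Real.log (1 + (1 - α - β) / (α * β)) < 0 ∧ -(1 - α - β) < 0 ∧
      deriv (fun x => M0 x β) α < 0 ∧ deriv (fun y => M0 α y) β < 0 ∧
      deriv (fun x => M1 x β) α < 0 ∧ deriv (fun y => M1 α y) β < 0 := by
  intro α β hα hβ hαβ
  have hC0 : 0 < H qt pt := by
    rw [hH]; exact Hpos qt pt h0 (lt_trans h1 h2) (lt_trans h0 h1) h2 h1.ne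
  have hC1 : 0 < H pt qt := by
    rw [hH]; exact Hpos pt qt (lt_trans h0 h1) h2 h0 (lt_trans h1 h2) h1.ne'
  have h1α : (0:ℝ) < 1 - α := by linarith
  have h1β : (0:ℝ) < 1 - β := by linarith
  have hα' : α ≠ 0 := hα.ne'
  have hβ' : β ≠ 0 := hβ.ne'
  have h1α' : (1:ℝ) - α ≠ 0 := h1α.ne'
  have h1β' : (1:ℝ) - β ≠ 0 := h1β.ne'
  -- negativity of the two key quantities
  have hv1 : -Real.log (1 + (1 - α - β) / (α * β)) < 0 := by
    have hpos : 0 < (1 - α - β) / (α * β) :=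
      div_pos (by linarith) (mul_pos hα hβ)
    have : 0 < Real.log (1 + (1 - α - β) / (α * β)) := Real.log_pos (by linarith)
    linarith
  have hv2 : -(1 - α - β) < 0 := by linarith
  -- the four derivatives
  have hfun0x : (fun x => M0 x β) =
      fun x => (x * Real.log (x / (1 - β)) + (1 - x) * Real.log ((1 - x) / β)) / H qt pt :=
    funext fun x => hM0 x β
  have hd1 : HasDerivAt (fun x => M0 x β)
      ((H qt pt)⁻¹ * (-Real.log (1 + (1 - α - β) / (α * β)))) α := by
    rw [hfun0x]
    have h := (lemA α β hα hβ hαβ).div_const (H qt pt)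
    rwa [div_eq_mul_inv, mul_comm] at h
  have hfun0y : (fun y => M0 α y) =
      fun y => (α * Real.log (α / (1 - y)) + (1 - α) * Real.log ((1 - α) / y)) / H qt pt :=
    funext fun y => hM0 α y
  have hd2 : HasDerivAt (fun y => M0 α y)
      ((β * (1 - β) * H qt pt)⁻¹ * (-(1 - α - β))) β := by
    rw [hfun0y]
    have h := (lemB α β hα hβ hαβ).div_const (H qt pt)
    refine h.congr_deriv ?_
    field_simp
  have hfun1x : (fun x => M1 x β) =
      fun x => (β * Real.log (β / (1 - x)) + (1 - β) * Real.log ((1 - β) / x)) / H pt qt :=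
    funext fun x => hM1 x β
  have hd3 : HasDerivAt (fun x => M1 x β)
      ((α * (1 - α) * H pt qt)⁻¹ * (-(1 - α - β))) α := by
    rw [hfun1x]
    have h := (lemB β α hβ hα (by linarith)).div_const (H pt qt)
    refine h.congr_deriv ?_
    field_simp
    ring
  have hfun1y : (fun y => M1 α y) =
      fun y => (y * Real.log (y / (1 - α)) + (1 - y) * Real.log ((1 - y) / α)) / H pt qt :=
    funext fun y => hM1 α y
  have hd4 : HasDerivAt (fun y => M1 α y)
      ((H pt qt)⁻¹ * (-Real.log (1 + (1 - α - β) / (α * β)))) β := by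
    rw [hfun1y]
    have h := (lemA β α hβ hα (by linarith)).div_const (H pt qt)
    have he : (1:ℝ) + (1 - β - α) / (β * α) = 1 + (1 - α - β) / (α * β) := by ring_nf
    rw [he] at h
    rwa [div_eq_mul_inv, mul_comm] at h
  have hc1 : (0:ℝ) < (H qt pt)⁻¹ := inv_pos.2 hC0
  have hc2 : (0:ℝ) < (β * (1 - β) * H qt pt)⁻¹ := by positivity
  have hc3 : (0:ℝ) < (α * (1 - α) * H pt qt)⁻¹ := by positivity
  have hc4 : (0:ℝ) < (H pt qt)⁻¹ := inv_pos.2 hC1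
  refine ⟨⟨_, hc1, hd1⟩, ⟨_, hc2, hd2⟩, ⟨_, hc3, hd3⟩, ⟨_, hc4, hd4⟩, hv1, hv2, ?_, ?_, ?_, ?_⟩
  · rw [hd1.deriv]; exact mul_neg_of_pos_of_neg hc1 hv1
  · rw [hd2.deriv]; exact mul_neg_of_pos_of_neg hc2 hv2
  · rw [hd3.deriv]; exact mul_neg_of_pos_of_neg hc3 hv2
  · rw [hd4.deriv]; exact mul_neg_of_pos_of_neg hc4 hv1
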